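/- Let M ≥ 1 be an integer and Δ > 0 a real, and let i_1, …, i_M be reals with 0 ≤ i_m ≤ Δ for every m ∈ {1,…,M}. Then ∑_{m=1}^{M} (2m − 1)·Δ·i_m ≥ (∑_{m=1}^{M} i_m)². -/

import Mathlib

lemma pwl_aux (Δ : ℝ) (hΔ : 0 ≤ Δ) :
    ∀ (M : ℕ) (i : ℕ → ℝ),
      (∀ m ∈ Finset.Icc 1 M, 0 ≤ i m ∧ i m ≤ Δ) →
      (∑ m ∈ Finset.Icc 1 M, i m) ^ 2
        ≤ ∑ m ∈ Finset.Icc 1 M, (2 * (m : ℝ) - 1) * Δ * i m := by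
  intro M
  induction M with
  | zero => intro i hi; simp
  | succ n ih =>
    intro i hi
    have h1 : (1 : ℕ) ≤ n + 1 := Nat.succ_le_succ (Nat.zero_le n)
    rw [Finset.sum_Icc_succ_top h1, Finset.sum_Icc_succ_top h1]
    have hi' : ∀ m ∈ Finset.Icc 1 n, 0 ≤ i m ∧ i m ≤ Δ := by
      intro m hm
      exact hi m (Finset.mem_Icc.mpr ⟨(Finset.mem_Icc.mp hm).1, (Finset.mem_Icc.mp hm).2.trans (Nat.le_succ n)⟩)
    have hlast := hi (n+1) (Finset.mem_Icc.mpr ⟨h1, le_rfl⟩)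
    set S := ∑ m ∈ Finset.Icc 1 n, i m with hS
    have hS0 : 0 ≤ S := Finset.sum_nonneg fun m hm => (hi' m hm).1
    have hSle : S ≤ n * Δ := by
      have := Finset.sum_le_card_nsmul (Finset.Icc 1 n) i Δ (fun m hm => (hi' m hm).2)
      simpa [Nat.card_Icc, nsmul_eq_mul] using this
    have key := ih i hi'
    have expand : (S + i (n+1)) ^ 2 = S ^ 2 + (2 * S * i (n+1) + i (n+1) ^ 2) := by ring
    rw [expand]
    have h2 : 2 * S * i (n+1) + i (n+1) ^ 2 ≤ (2 * ((n:ℝ)+1) - 1) * Δ * i (n+1) := by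
      have e1 : 2 * S * i (n+1) ≤ 2 * ((n:ℝ) * Δ) * i (n+1) := by
        apply mul_le_mul_of_nonneg_right _ hlast.1
        linarith
      have e2 : i (n+1) ^ 2 ≤ Δ * i (n+1) := by
        have := mul_le_mul_of_nonneg_right hlast.2 hlast.1
        nlinarith
      nlinarith
    push_cast
    linarith

/-- The relaxed PWL model over-estimates the quadratic term: with segment
variables `i m ∈ [0, Δ]` for `m ∈ {1,…,M}` and slopes `(2m−1)·Δ`, the surrogate
`∑ (2m−1)·Δ·i m` dominates `(∑ i m)²`. -/
theorem pwl_overestimates_square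
    (M : ℕ) (hM : 1 ≤ M) (Δ : ℝ) (hΔ : 0 < Δ)
    (i : ℕ → ℝ)
    (hi : ∀ m ∈ Finset.Icc 1 M, 0 ≤ i m ∧ i m ≤ Δ) :
    (∑ m ∈ Finset.Icc 1 M, i m) ^ 2
      ≤ ∑ m ∈ Finset.Icc 1 M, (2 * (m : ℝ) - 1) * Δ * i m :=
  pwl_aux Δ hΔ.le M i hi
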